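/- For positive definite n×n matrices A and B, d_l(A, A♯B) + d_l(A♯B, (A+B)/2) ≤ d_l(A,B), where A♯B = A♯_{1/2}B is the geometric mean and d_l is the Log-Determinant metric. -/

import Mathlib

open Matrix ComplexOrder

/-- Matrix power via functional calculus (spectral decomposition), for Hermitian matrices. -/
noncomputable def mpow {n : Type*} [Fintype n] [DecidableEq n]
    (A : Matrix n n ℂ) (p : ℝ) : Matrix n n ℂ :=
  if hA : A.IsHermitian then
    (hA.eigenvectorUnitary : Matrix n n ℂ) *
      Matrix.diagonal (fun i => ((hA.eigenvalues i ^ p : ℝ) : ℂ)) *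
      star (hA.eigenvectorUnitary : Matrix n n ℂ)
  else 0

/-- Hellinger distance. -/
noncomputable def dh {n : Type*} [Fintype n] [DecidableEq n]
    (A B : Matrix n n ℂ) : ℝ :=
  Real.sqrt ((Matrix.trace (A + B)).re
    - 2 * (Matrix.trace (mpow A (1/2) * mpow B (1/2))).re)

/-- Bures–Wasserstein distance. -/
noncomputable def db {n : Type*} [Fintype n] [DecidableEq n]
    (A B : Matrix n n ℂ) : ℝ :=
  Real.sqrt ((Matrix.trace (A + B)).re
    - 2 * (Matrix.trace (mpow (mpow A (1/2) * B * mpow A (1/2)) (1/2))).re)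

/-- Log-determinant distance. -/
noncomputable def dl {n : Type*} [Fintype n] [DecidableEq n]
    (A B : Matrix n n ℂ) : ℝ :=
  Real.log (((A + B) / 2).det).re
    - (1/2) * (Real.log (A.det.re) + Real.log (B.det.re))

/-- Matrix power mean μ_p(t;A,B) = (t A^p + (1-t) B^p)^{1/p}. -/
noncomputable def mpm {n : Type*} [Fintype n] [DecidableEq n]
    (p t : ℝ) (A B : Matrix n n ℂ) : Matrix n n ℂ :=
  mpow ((t : ℂ) • mpow A p + ((1 - t : ℝ) : ℂ) • mpow B p) (1/p)

/-- Weighted geometric mean A ♯_t B. -/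
noncomputable def sharp {n : Type*} [Fintype n] [DecidableEq n]
    (t : ℝ) (A B : Matrix n n ℂ) : Matrix n n ℂ :=
  mpow A (1/2) * mpow (mpow A (-(1/2)) * B * mpow A (-(1/2))) t * mpow A (1/2)

/-- Quantum fidelity. -/
noncomputable def fid {n : Type*} [Fintype n] [DecidableEq n]
    (A B : Matrix n n ℂ) : ℝ :=
  ((Matrix.trace (mpow (mpow A (1/2) * B * mpow A (1/2)) (1/2))).re) ^ 2


section Aux

variable {n : Type*} [Fintype n] [DecidableEq n]

lemma posdef_conj {B S : Matrix n n ℂ} (hB : B.PosDef) (hS : IsUnit S) :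
    (Sᴴ * B * S).PosDef := by
  refine Matrix.PosDef.of_dotProduct_mulVec_pos (Matrix.isHermitian_conjTranspose_mul_mul S hB.isHermitian) fun x hx => ?_
  have hx' : S *ᵥ x ≠ 0 := fun hz =>
    hx ((Matrix.mulVec_injective_iff_isUnit.mpr hS) (hz.trans (Matrix.mulVec_zero S).symm))
  have e1 : (Sᴴ * B * S) *ᵥ x = Sᴴ *ᵥ (B *ᵥ (S *ᵥ x)) := by
    simp [Matrix.mulVec_mulVec, Matrix.mul_assoc]
  rw [e1, Matrix.dotProduct_mulVec, ← Matrix.star_mulVec]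
  exact hB.dotProduct_mulVec_pos hx'

/-- functional calculus on a Hermitian matrix -/
noncomputable def phi {C : Matrix n n ℂ} (h : C.IsHermitian) (d : n → ℝ) : Matrix n n ℂ :=
  (h.eigenvectorUnitary : Matrix n n ℂ) * Matrix.diagonal (fun i => ((d i : ℝ) : ℂ)) *
    star (h.eigenvectorUnitary : Matrix n n ℂ)

variable {C : Matrix n n ℂ} (h : C.IsHermitian)

lemma phi_congr (d e : n → ℝ) (hde : ∀ i, d i = e i) : phi h d = phi h e := by
  have hfe : (fun i => ((d i : ℝ) : ℂ)) = fun i => ((e i : ℝ) : ℂ) :=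
    funext fun i => by rw [hde]
  unfold phi
  rw [hfe]

lemma phi_mul (d e : n → ℝ) : phi h d * phi h e = phi h (fun i => d i * e i) := by
  have h1 : star (h.eigenvectorUnitary : Matrix n n ℂ) * (h.eigenvectorUnitary : Matrix n n ℂ) = 1 :=
    Matrix.mem_unitaryGroup_iff'.mp h.eigenvectorUnitary.2
  unfold phi
  simp only [Matrix.mul_assoc]
  rw [← Matrix.mul_assoc (star (h.eigenvectorUnitary : Matrix n n ℂ)), h1, Matrix.one_mul,
    ← Matrix.mul_assoc (Matrix.diagonal _), Matrix.diagonal_mul_diagonal]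
  congr 2
  funext i
  push_cast
  ring

lemma phi_one : phi h (fun _ => 1) = 1 := by
  have h2 : (h.eigenvectorUnitary : Matrix n n ℂ) * star (h.eigenvectorUnitary : Matrix n n ℂ) = 1 :=
    Matrix.mem_unitaryGroup_iff.mp h.eigenvectorUnitary.2
  unfold phi
  simp only [Complex.ofReal_one]
  rw [Matrix.diagonal_one, Matrix.mul_one, h2]

lemma phi_add (d e : n → ℝ) : phi h d + phi h e = phi h (fun i => d i + e i) := by
  unfold phi
  rw [← Matrix.add_mul, ← Matrix.mul_add, Matrix.diagonal_add]
  congr 2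
  funext i
  push_cast
  ring

lemma phi_smul (c : ℝ) (d : n → ℝ) : ((c : ℝ) : ℂ) • phi h d = phi h (fun i => c * d i) := by
  have hdiag : Matrix.diagonal (fun i => ((c * d i : ℝ) : ℂ))
      = ((c : ℝ) : ℂ) • Matrix.diagonal (fun i => ((d i : ℝ) : ℂ)) := by
    ext i j
    rcases eq_or_ne i j with rfl | hij
    · simp only [Matrix.diagonal_apply_eq, Matrix.smul_apply, smul_eq_mul]
      push_cast
      ring
    · simp only [Matrix.diagonal_apply_ne _ hij, Matrix.smul_apply, smul_eq_mul, mul_zero]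
  unfold phi
  rw [hdiag, mul_smul_comm, smul_mul_assoc]

lemma phi_det (d : n → ℝ) : (phi h d).det = ((∏ i, d i : ℝ) : ℂ) := by
  have h2 : (h.eigenvectorUnitary : Matrix n n ℂ) * star (h.eigenvectorUnitary : Matrix n n ℂ) = 1 :=
    Matrix.mem_unitaryGroup_iff.mp h.eigenvectorUnitary.2
  have h3 : (h.eigenvectorUnitary : Matrix n n ℂ).det
      * (star (h.eigenvectorUnitary : Matrix n n ℂ)).det = 1 := by
    rw [← Matrix.det_mul, h2, Matrix.det_one]
  unfold phi
  rw [Matrix.det_mul, Matrix.det_mul, Matrix.det_diagonal]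
  push_cast
  calc (h.eigenvectorUnitary : Matrix n n ℂ).det * (∏ i, ((d i : ℝ) : ℂ))
        * (star (h.eigenvectorUnitary : Matrix n n ℂ)).det
      = ((h.eigenvectorUnitary : Matrix n n ℂ).det
        * (star (h.eigenvectorUnitary : Matrix n n ℂ)).det) * (∏ i, ((d i : ℝ) : ℂ)) := by ring
    _ = ∏ i, ((d i : ℝ) : ℂ) := by rw [h3, one_mul]

lemma phi_spectral : phi h h.eigenvalues = C := by
  conv_rhs => rw [h.spectral_theorem]
  rfl

lemma phi_posDef (d : n → ℝ) (hd : ∀ i, 0 < d i) : (phi h d).PosDef := by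
  have hU : IsUnit (star (h.eigenvectorUnitary : Matrix n n ℂ)) :=
    ⟨⟨star (h.eigenvectorUnitary : Matrix n n ℂ), (h.eigenvectorUnitary : Matrix n n ℂ),
      Matrix.mem_unitaryGroup_iff'.mp h.eigenvectorUnitary.2,
      Matrix.mem_unitaryGroup_iff.mp h.eigenvectorUnitary.2⟩, rfl⟩
  have hD : (Matrix.diagonal (fun i => ((d i : ℝ) : ℂ))).PosDef :=
    Matrix.posDef_diagonal_iff.mpr fun i => Complex.zero_lt_real.mpr (hd i)
  have hconj := posdef_conj hD hU
  have e : (star (h.eigenvectorUnitary : Matrix n n ℂ))ᴴ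
      = (h.eigenvectorUnitary : Matrix n n ℂ) := by
    rw [Matrix.star_eq_conjTranspose, Matrix.conjTranspose_conjTranspose]
  rw [e] at hconj
  exact hconj

lemma mpow_phi {C : Matrix n n ℂ} (h : C.IsHermitian) (p : ℝ) :
    mpow C p = phi h (fun i => h.eigenvalues i ^ p) := by
  rw [mpow, dif_pos h]
  rfl

lemma mpow_mul_mpow {A : Matrix n n ℂ} (hA : A.PosDef) (p q : ℝ) :
    mpow A p * mpow A q = mpow A (p + q) := by
  rw [mpow_phi hA.1, mpow_phi hA.1, mpow_phi hA.1, phi_mul]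
  exact phi_congr hA.1 _ _ fun i => (Real.rpow_add (hA.eigenvalues_pos i) p q).symm

lemma mpow_zero {A : Matrix n n ℂ} (h : A.IsHermitian) : mpow A 0 = 1 := by
  rw [mpow_phi h]
  calc phi h (fun i => h.eigenvalues i ^ (0:ℝ)) = phi h (fun _ => 1) :=
        phi_congr h _ _ fun i => Real.rpow_zero _
    _ = 1 := phi_one h

lemma mpow_one {A : Matrix n n ℂ} (h : A.IsHermitian) : mpow A 1 = A := by
  rw [mpow_phi h]
  calc phi h (fun i => h.eigenvalues i ^ (1:ℝ)) = phi h h.eigenvalues :=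
        phi_congr h _ _ fun i => Real.rpow_one _
    _ = A := phi_spectral h

lemma mpow_posDef {A : Matrix n n ℂ} (hA : A.PosDef) (p : ℝ) : (mpow A p).PosDef := by
  rw [mpow_phi hA.1]
  exact phi_posDef hA.1 _ fun i => Real.rpow_pos_of_pos (hA.eigenvalues_pos i) _

lemma matrix_div_two (X : Matrix n n ℂ) : X / 2 = ((2:ℂ)⁻¹) • X := by
  have h2 : (2 : Matrix n n ℂ) = (2:ℂ) • 1 := by rw [two_smul, one_add_one_eq_two]
  have hinv : (2 : Matrix n n ℂ)⁻¹ = (2:ℂ)⁻¹ • 1 := Matrix.inv_eq_right_inv (by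
    rw [h2, smul_mul_assoc, mul_smul_comm, smul_smul, Matrix.one_mul]
    norm_num)
  rw [div_eq_mul_inv, hinv, mul_smul_comm, Matrix.mul_one]

lemma conj_comb (S : Matrix n n ℂ) (d e : n → ℝ) :
    (S * phi h d * S + S * phi h e * S) / 2 = S * phi h (fun i => (d i + e i) / 2) * S := by
  rw [matrix_div_two, ← Matrix.add_mul, ← Matrix.mul_add, phi_add, ← smul_mul_assoc,
    ← mul_smul_comm, show ((2:ℂ)⁻¹) = (((2⁻¹:ℝ) : ℝ) : ℂ) by norm_num, phi_smul]
  refine congrArg (· * S) (congrArg (S * ·) (phi_congr h _ _ fun i => ?_))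
  show (2:ℝ)⁻¹ * (d i + e i) = (d i + e i) / 2
  ring

lemma dl_conj_phi {S : Matrix n n ℂ} (hS : S.PosDef)
    (d e : n → ℝ) (hd : ∀ i, 0 < d i) (he : ∀ i, 0 < e i) :
    dl (S * phi h d * S) (S * phi h e * S)
      = ∑ i, (Real.log ((d i + e i) / 2) - 1/2 * (Real.log (d i) + Real.log (e i))) := by
  obtain ⟨s, hs, hdetS⟩ : ∃ s : ℝ, 0 < s ∧ S.det = (s : ℂ) := by
    have h0 := hS.det_pos
    rw [Complex.lt_def] at h0
    obtain ⟨h1, h2⟩ := h0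
    exact ⟨S.det.re, by simpa using h1, (Complex.ext (by simp) (by simp [← h2])).symm⟩
  have hkey : ∀ f : n → ℝ, (S * phi h f * S).det.re = s ^ 2 * ∏ i, f i := by
    intro f
    rw [Matrix.det_mul, Matrix.det_mul, phi_det, hdetS, ← Complex.ofReal_mul,
      ← Complex.ofReal_mul, Complex.ofReal_re]
    ring
  unfold dl
  rw [conj_comb h S d e]
  rw [hkey, hkey, hkey]
  have hPd : 0 < ∏ i, d i := Finset.prod_pos fun i _ => hd i
  have hPe : 0 < ∏ i, e i := Finset.prod_pos fun i _ => he i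
  have hPm : 0 < ∏ i, (d i + e i) / 2 := Finset.prod_pos fun i _ => by
    have := hd i; have := he i; positivity
  have hs2 : (0:ℝ) < s ^ 2 := by positivity
  rw [Real.log_mul hs2.ne' hPm.ne', Real.log_mul hs2.ne' hPd.ne', Real.log_mul hs2.ne' hPe.ne',
    Real.log_prod (fun i _ => (by have := hd i; have := he i; positivity : (0:ℝ) < (d i + e i)/2).ne'),
    Real.log_prod (fun i _ => (hd i).ne'), Real.log_prod (fun i _ => (he i).ne'),
    Finset.sum_sub_distrib, ← Finset.mul_sum, Finset.sum_add_distrib]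
  ring

lemma scalar_ineq {x : ℝ} (hx : 0 < x) :
    (Real.log ((1 + x ^ ((1:ℝ)/2)) / 2) - 1/2 * (Real.log 1 + Real.log (x ^ ((1:ℝ)/2))))
      + (Real.log ((x ^ ((1:ℝ)/2) + (1 + x) / 2) / 2)
        - 1/2 * (Real.log (x ^ ((1:ℝ)/2)) + Real.log ((1 + x) / 2)))
    ≤ Real.log ((1 + x) / 2) - 1/2 * (Real.log 1 + Real.log x) := by
  set s := x ^ ((1:ℝ)/2) with hsdef
  have hs : 0 < s := Real.rpow_pos_of_pos hx _
  have hs2 : s ^ 2 = x := by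
    rw [hsdef, ← Real.rpow_natCast (x ^ ((1:ℝ)/2)) 2, ← Real.rpow_mul hx.le]
    norm_num
  rw [← hs2]
  have e1 : (s + (1 + s ^ 2) / 2) / 2 = ((1 + s) / 2) ^ 2 := by ring
  rw [e1, Real.log_pow, Real.log_pow, Real.log_one]
  have h1 : (0:ℝ) < (1 + s) / 2 := by linarith
  have h2 : ((1 + s) / 2) ^ 2 ≤ (1 + s ^ 2) / 2 := by nlinarith [sq_nonneg (1 - s)]
  have key : 2 * Real.log ((1 + s) / 2) ≤ Real.log ((1 + s ^ 2) / 2) := by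
    calc 2 * Real.log ((1 + s) / 2) = Real.log (((1 + s) / 2) ^ 2) := by
          rw [Real.log_pow]; push_cast; ring
      _ ≤ Real.log ((1 + s ^ 2) / 2) := Real.log_le_log (by positivity) h2
  push_cast
  linarith

end Aux

theorem stmt15 {n : Type*} [Fintype n] [DecidableEq n]
    {A B : Matrix n n ℂ} (hA : A.PosDef) (hB : B.PosDef) :
    dl A (sharp (1/2) A B) + dl (sharp (1/2) A B) ((A + B) / 2) ≤ dl A B := by
  classical
  set S := mpow A (1/2) with hSdef
  set T := mpow A (-(1/2)) with hTdef
  have hS : S.PosDef := mpow_posDef hA _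
  have hT : T.PosDef := mpow_posDef hA _
  have hSS : S * S = A := by
    rw [hSdef, mpow_mul_mpow hA, show (1/2 + 1/2 : ℝ) = 1 by norm_num, mpow_one hA.1]
  have hST : S * T = 1 := by
    rw [hSdef, hTdef, mpow_mul_mpow hA, show (1/2 + -(1/2) : ℝ) = 0 by norm_num, mpow_zero hA.1]
  have hTS : T * S = 1 := by
    rw [hSdef, hTdef, mpow_mul_mpow hA, show (-(1/2) + 1/2 : ℝ) = 0 by norm_num, mpow_zero hA.1]
  set C := T * B * T with hCdef
  have hC : C.PosDef := by
    have e : Tᴴ = T := hT.isHermitian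
    have hconj := posdef_conj hB hT.isUnit
    rw [e] at hconj
    rw [hCdef]
    exact hconj
  have h : C.IsHermitian := hC.1
  have hlam : ∀ i, 0 < h.eigenvalues i := fun i => hC.eigenvalues_pos i
  have repA : A = S * phi h (fun _ => 1) * S := by
    rw [phi_one, Matrix.mul_one, hSS]
  have repB : B = S * phi h (fun i => h.eigenvalues i) * S := by
    have e1 : phi h (fun i => h.eigenvalues i) = C := phi_spectral h
    rw [e1, hCdef]
    have e2 : S * (T * B * T) * S = (S * T) * B * (T * S) := by
      simp only [Matrix.mul_assoc]
    rw [e2, hST, hTS, Matrix.one_mul, Matrix.mul_one]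
  have repG : sharp (1/2) A B = S * phi h (fun i => h.eigenvalues i ^ ((1:ℝ)/2)) * S := by
    unfold sharp
    rw [← hSdef, ← hTdef, ← hCdef, mpow_phi h]
  have repM : (A + B) / 2 = S * phi h (fun i => (1 + h.eigenvalues i) / 2) * S := by
    conv_lhs => rw [repA, repB]
    rw [conj_comb h S]
  rw [repG, repM, repA, repB]
  rw [dl_conj_phi h hS _ _ (fun _ => one_pos)
      (fun i => Real.rpow_pos_of_pos (hlam i) _),
    dl_conj_phi h hS _ _ (fun i => Real.rpow_pos_of_pos (hlam i) _)
      (fun i => by have := hlam i; positivity),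
    dl_conj_phi h hS _ _ (fun _ => one_pos) hlam,
    ← Finset.sum_add_distrib]
  refine Finset.sum_le_sum fun i _ => ?_
  exact scalar_ineq (hlam i)
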